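/- Let A, B, M > 0, let ψ : ℝ → ℝ be measurable with |ψ(s)| ≤ A (1 + s²)^{−1/2} for all s ∈ ℝ, and let F : ℝ → [0, ∞) be measurable with F(s) ≤ B for all s and F(s) ≤ B/(log |s|)² for all |s| ≥ 2. Then there exist h₀ ∈ (0, 1) and C > 0, depending only on A, B and M, such that for every h ∈ (0, h₀] and every z ∈ ℝ with |z| ≤ M, ∫_ℝ |ψ(s)| F(hs + z) ds ≤ C (log h)². -/

import Mathlib

open MeasureTheory
open Set Filter Topology


/-- If a function of `|x|` is integrable on `(0,∞)`, it is integrable on `ℝ`. -/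
lemma my_integrable_comp_abs {f : ℝ → ℝ} (hf : IntegrableOn (fun x => f |x|) (Ioi 0)) :
    Integrable (fun x : ℝ => f |x|) := by
  have int_Iic : IntegrableOn (fun x ↦ f |x|) (Iic 0) := by
    rw [← Measure.map_neg_eq_self (volume : Measure ℝ)]
    let m : MeasurableEmbedding fun x : ℝ => -x := (Homeomorph.neg ℝ).measurableEmbedding
    rw [m.integrableOn_map_iff]
    simp_rw [Function.comp_def, abs_neg, neg_preimage, neg_Iic, neg_zero]
    exact (Iff.mpr integrableOn_Ici_iff_integrableOn_Ioi) hf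
  rw [← integrableOn_univ, ← Set.Iic_union_Ioi (a := (0:ℝ))]
  exact int_Iic.union hf

/-- FTC computation for the tail. -/
lemma my_tail (c S : ℝ) (hc : 0 < c) (hS : 0 < S) (h2 : 2 ≤ c * S) :
    IntegrableOn (fun t => t⁻¹ * ((Real.log (c*t))⁻¹)^2) (Ioi S) ∧
    ∫ t in Ioi S, t⁻¹ * ((Real.log (c*t))⁻¹)^2 = (Real.log (c*S))⁻¹ := by
  set g : ℝ → ℝ := fun t => -(Real.log (c*t))⁻¹ with hg
  set g' : ℝ → ℝ := fun t => t⁻¹ * ((Real.log (c*t))⁻¹)^2 with hg'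
  have hderiv : ∀ x ∈ Ici S, HasDerivAt g (g' x) x := by
    intro x hx
    have hxpos : 0 < x := lt_of_lt_of_le hS hx
    have hcx : 1 < c * x := by nlinarith [mul_le_mul_of_nonneg_left hx.out hc.le]
    have hlogpos : 0 < Real.log (c*x) := Real.log_pos hcx
    have h1 : HasDerivAt (fun t : ℝ => c*t) c x := by
      simpa using (hasDerivAt_id x).const_mul c
    have h2' : HasDerivAt (fun t => Real.log (c*t)) ((c*x)⁻¹ * c) x :=
      (Real.hasDerivAt_log (by positivity)).comp x h1
    have h3 := (h2'.inv hlogpos.ne').neg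
    have e : g' x = -(-((c * x)⁻¹ * c) / Real.log (c * x) ^ 2) := by
      simp only [hg']
      field_simp
    rw [e]
    exact h3
  have htend : Tendsto g atTop (𝓝 0) := by
    have h1 : Tendsto (fun t : ℝ => Real.log (c*t)) atTop atTop :=
      Real.tendsto_log_atTop.comp (tendsto_id.const_mul_atTop hc)
    have := (h1.inv_tendsto_atTop).neg
    simpa [hg] using this
  have hpos : ∀ x ∈ Ioi S, 0 ≤ g' x := by
    intro x hx
    have : 0 < x := lt_trans hS hx
    positivity
  refine ⟨integrableOn_Ioi_deriv_of_nonneg' hderiv hpos htend, ?_⟩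
  have := integral_Ioi_of_hasDerivAt_of_nonneg' hderiv hpos htend
  simpa [hg] using this

set_option maxHeartbeats 1000000 in
/-- For `ψ` with Cauchy-type decay and `F` bounded with logarithmic decay, the smoothed
integral `∫ |ψ(s)| F(hs+z) ds` is of order `(log h)²` uniformly over `|z| ≤ M` and small
bandwidths `h`. -/
theorem integral_abs_kernel_mul_log_decay_le
    (A B M : ℝ) (hA : 0 < A) (hB : 0 < B) (hM : 0 < M)
    (ψ : ℝ → ℝ) (hψ_meas : Measurable ψ)
    (hψ : ∀ s : ℝ, |ψ s| ≤ A * (1 + s ^ 2) ^ (-(1:ℝ)/2))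
    (F : ℝ → ℝ) (hF_meas : Measurable F) (hF_nonneg : ∀ s, 0 ≤ F s)
    (hF_bdd : ∀ s, F s ≤ B)
    (hF_log : ∀ s : ℝ, 2 ≤ |s| → F s ≤ B / Real.log |s| ^ 2) :
    ∃ h₀ C : ℝ, 0 < h₀ ∧ h₀ < 1 ∧ 0 < C ∧
      ∀ h : ℝ, 0 < h → h ≤ h₀ → ∀ z : ℝ, |z| ≤ M →
        ∫ s : ℝ, |ψ s| * F (h * s + z) ≤ C * Real.log h ^ 2 := by
  have hlog2 : 0 < Real.log 2 := Real.log_pos one_lt_two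
  have hlogM : 0 < Real.log (M + 2) := Real.log_pos (by linarith)
  refine ⟨Real.exp (-1), 2*A*B*(2 + (Real.log 2)⁻¹ + Real.log (M+2)),
    Real.exp_pos _, Real.exp_lt_one_iff.mpr (by norm_num), by positivity, ?_⟩
  intro h hpos hh z hz
  -- basic facts about h
  have hL1 : 1 ≤ -Real.log h := by
    have := Real.log_le_log hpos hh
    rw [Real.log_exp] at this
    linarith
  have hh1 : h < 1 := lt_of_le_of_lt hh (Real.exp_lt_one_iff.mpr (by norm_num))
  set S : ℝ := (M + 2) / h with hSdef
  set c : ℝ := 2 * h / (M + 2) with hcdef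
  have hcpos : 0 < c := by positivity
  have hSpos : 0 < S := by positivity
  have hS1 : 1 < S := by
    rw [hSdef, lt_div_iff₀ hpos]; nlinarith
  have hcS : c * S = 2 := by
    rw [hcdef, hSdef]; field_simp
  have hhS : h * S = M + 2 := by
    rw [hSdef]; field_simp
  -- the dominating function
  set G : ℝ → ℝ := fun t => A * B * ((if t ≤ 1 then 1 else t⁻¹) *
      (if t ≤ S then 1 else ((Real.log (c*t))⁻¹)^2)) with hGdef
  -- pointwise bound
  have hbound : ∀ s : ℝ, |ψ s| * F (h * s + z) ≤ G |s| := by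
    intro s
    have hφ0 : (0:ℝ) ≤ (if |s| ≤ 1 then 1 else |s|⁻¹) := by positivity
    have hφ : (1 + s ^ 2) ^ (-(1:ℝ)/2) ≤ (if |s| ≤ 1 then 1 else |s|⁻¹) := by
      split_ifs with h1
      · exact Real.rpow_le_one_of_one_le_of_nonpos (by nlinarith) (by norm_num)
      · push_neg at h1
        have habs : (0:ℝ) < |s| := lt_trans one_pos h1
        have e1 : (s ^ 2 : ℝ) ^ (-(1:ℝ)/2) = |s|⁻¹ := by
          rw [← sq_abs, ← Real.rpow_natCast |s| 2, ← Real.rpow_mul (abs_nonneg s)]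
          norm_num [Real.rpow_neg_one]
        calc (1 + s ^ 2) ^ (-(1:ℝ)/2) ≤ (s ^ 2 : ℝ) ^ (-(1:ℝ)/2) :=
              Real.rpow_le_rpow_of_nonpos (sq_abs s ▸ pow_pos habs 2) (by linarith) (by norm_num)
          _ = |s|⁻¹ := e1
    have hρ : F (h * s + z) ≤ B * (if |s| ≤ S then 1 else ((Real.log (c*|s|))⁻¹)^2) := by
      split_ifs with h1
      · simpa using hF_bdd (h*s+z)
      · push_neg at h1
        have hhs : M + 2 ≤ h * |s| := by
          have := mul_le_mul_of_nonneg_left h1.le hpos.le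
          linarith [hhS]
        have h2cs : (2:ℝ) ≤ c * |s| := by
          have := mul_le_mul_of_nonneg_left h1.le hcpos.le
          linarith [hcS]
        have hcs_le : c * |s| ≤ h * |s| - M := by
          rw [hcdef, div_mul_eq_mul_div, div_le_iff₀ (by linarith : (0:ℝ) < M + 2)]
          nlinarith [mul_nonneg hM.le (sub_nonneg.2 hhs)]
        have habs : c * |s| ≤ |h * s + z| := by
          have e1 : |h * s| ≤ |h * s + z| + |z| := by
            calc |h * s| = |(h * s + z) + (-z)| := by ring_nf
              _ ≤ |h * s + z| + |(-z)| := abs_add_le _ _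
              _ = |h * s + z| + |z| := by rw [abs_neg]
          have e2 : |h * s| = h * |s| := by rw [abs_mul, abs_of_pos hpos]
          linarith
        have h2abs : (2:ℝ) ≤ |h * s + z| := le_trans h2cs habs
        have hlogcs : 0 < Real.log (c * |s|) := Real.log_pos (by linarith)
        calc F (h * s + z) ≤ B / Real.log |h * s + z| ^ 2 := hF_log _ h2abs
          _ ≤ B / Real.log (c * |s|) ^ 2 := by
              apply div_le_div_of_nonneg_left hB.le (by positivity)
              have := Real.log_le_log (by linarith : (0:ℝ) < c * |s|) habs
              exact pow_le_pow_left₀ hlogcs.le this 2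
          _ = B * ((Real.log (c*|s|))⁻¹)^2 := by rw [div_eq_mul_inv, inv_pow]
    have := mul_le_mul ((hψ s).trans (mul_le_mul_of_nonneg_left hφ hA.le))
      hρ (hF_nonneg _) (mul_nonneg hA.le hφ0)
    calc |ψ s| * F (h * s + z)
        ≤ (A * (if |s| ≤ 1 then 1 else |s|⁻¹)) *
          (B * (if |s| ≤ S then 1 else ((Real.log (c*|s|))⁻¹)^2)) := this
      _ = G |s| := by rw [hGdef]; ring
  -- integrability of G on pieces
  have hd1 : IntegrableOn G (Ioc (0:ℝ) 1) := by
    apply (integrableOn_const (s := Ioc (0:ℝ) 1) (μ := volume) (C := A * B) measure_Ioc_lt_top.ne).congr_fun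
      _ measurableSet_Ioc
    intro t ht
    simp only [hGdef, if_pos ht.2, if_pos (le_trans ht.2 hS1.le), mul_one]
  have hd2 : IntegrableOn G (Ioc (1:ℝ) S) := by
    have hcont : ContinuousOn (fun t : ℝ => A * B * t⁻¹) (Icc 1 S) := by
      apply ContinuousOn.mul continuousOn_const
      exact continuousOn_inv₀.mono (fun t ht => by
        simp only [mem_compl_iff, mem_singleton_iff]
        intro h0; rw [h0] at ht; exact absurd ht.1 (by norm_num))
    apply ((hcont.integrableOn_Icc).mono_set Ioc_subset_Icc_self).congr_fun
      _ measurableSet_Ioc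
    intro t ht
    simp only [hGdef, if_neg (not_le.2 ht.1), if_pos ht.2, mul_one]
  have htail := my_tail c S hcpos hSpos (le_of_eq hcS.symm)
  have hEqOn3 : EqOn (fun t => A * B * (t⁻¹ * ((Real.log (c*t))⁻¹)^2)) G (Ioi S) := by
    intro t ht
    simp only [hGdef, if_neg (not_le.2 (lt_trans hS1 ht)), if_neg (not_le.2 ht.out)]
  have hd3 : IntegrableOn G (Ioi S) :=
    IntegrableOn.congr_fun (htail.1.const_mul (A*B)) hEqOn3 measurableSet_Ioi
  -- integrability of G ∘ abs
  have hGOn : IntegrableOn G (Ioi (0:ℝ)) := by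
    rw [show Ioi (0:ℝ) = (Ioc 0 1 ∪ Ioc 1 S) ∪ Ioi S by
      rw [Ioc_union_Ioc_eq_Ioc zero_le_one hS1.le, Ioc_union_Ioi_eq_Ioi hSpos.le]]
    exact (hd1.union hd2).union hd3
  have hGabs : Integrable (fun x : ℝ => G |x|) := by
    apply my_integrable_comp_abs
    apply hGOn.congr_fun _ measurableSet_Ioi
    intro t ht
    simp [abs_of_pos ht.out]
  -- integrability of the integrand
  have hf_meas : Measurable fun s => |ψ s| * F (h * s + z) :=
    hψ_meas.abs.mul (hF_meas.comp (by fun_prop))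
  have hf_int : Integrable fun s => |ψ s| * F (h * s + z) := by
    apply hGabs.mono' hf_meas.aestronglyMeasurable
    filter_upwards with s
    rw [Real.norm_eq_abs, abs_of_nonneg (mul_nonneg (abs_nonneg _) (hF_nonneg _))]
    exact hbound s
  -- compute the integral of G
  have hI1 : ∫ t in Ioc (0:ℝ) 1, G t = A * B := by
    rw [setIntegral_congr_fun measurableSet_Ioc
      (g := fun _ => A * B) (fun t ht => by
        simp only [hGdef, if_pos ht.2, if_pos (le_trans ht.2 hS1.le), mul_one])]
    simp
  have hI2 : ∫ t in Ioc (1:ℝ) S, G t = A * B * Real.log S := by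
    rw [setIntegral_congr_fun measurableSet_Ioc
      (g := fun t => A * B * t⁻¹) (fun t ht => by
        simp only [hGdef, if_neg (not_le.2 ht.1), if_pos ht.2, mul_one])]
    rw [← intervalIntegral.integral_of_le hS1.le, intervalIntegral.integral_const_mul,
      integral_inv_of_pos one_pos hSpos, div_one]
  have hI3 : ∫ t in Ioi S, G t = A * B * (Real.log 2)⁻¹ := by
    rw [← setIntegral_congr_fun measurableSet_Ioi hEqOn3]
    rw [MeasureTheory.integral_const_mul, htail.2, hcS]
  have hIoi : ∫ t in Ioi (0:ℝ), G t
      = A * B + A * B * Real.log S + A * B * (Real.log 2)⁻¹ := by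
    rw [show Ioi (0:ℝ) = (Ioc 0 1 ∪ Ioc 1 S) ∪ Ioi S by
      rw [Ioc_union_Ioc_eq_Ioc zero_le_one hS1.le, Ioc_union_Ioi_eq_Ioi hSpos.le]]
    rw [setIntegral_union ((Set.Iic_disjoint_Ioi le_rfl).mono_left
        (union_subset (Ioc_subset_Iic_self.trans (Iic_subset_Iic.2 hS1.le))
          Ioc_subset_Iic_self))
      measurableSet_Ioi (hd1.union hd2) hd3]
    rw [setIntegral_union (Set.Ioc_disjoint_Ioc_of_le le_rfl) measurableSet_Ioc hd1 hd2]
    rw [hI1, hI2, hI3]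
  -- final chain
  have hlogS : Real.log S = Real.log (M + 2) - Real.log h := by
    rw [hSdef, Real.log_div (by linarith) hpos.ne']
  calc ∫ s : ℝ, |ψ s| * F (h * s + z)
      ≤ ∫ s : ℝ, G |s| := integral_mono hf_int hGabs hbound
    _ = 2 * ∫ t in Ioi (0:ℝ), G t := integral_comp_abs
    _ = 2 * (A * B + A * B * (Real.log (M+2) - Real.log h) + A * B * (Real.log 2)⁻¹) := by
        rw [hIoi, hlogS]
    _ ≤ 2*A*B*(2 + (Real.log 2)⁻¹ + Real.log (M+2)) * Real.log h ^ 2 := by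
        obtain ⟨L, hL⟩ : ∃ L : ℝ, Real.log h = -L := ⟨-Real.log h, by ring⟩
        rw [hL]
        have hL1' : 1 ≤ L := by rw [hL] at hL1; linarith
        have hAB : 0 < A * B := by positivity
        have hLsq : L ≤ L ^ 2 := by nlinarith
        have h1Lsq : 1 ≤ L ^ 2 := by nlinarith
        nlinarith [mul_nonneg hAB.le (mul_nonneg hlogM.le (sub_nonneg.2 h1Lsq)),
          mul_nonneg hAB.le (mul_nonneg (inv_pos.2 hlog2).le (sub_nonneg.2 h1Lsq)),
          mul_nonneg hAB.le (sub_nonneg.2 hLsq),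
          mul_nonneg hAB.le (sub_nonneg.2 h1Lsq)]
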